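/- arXiv:2308.01410 — 2 statements merged into one kernel-verified Lean document; each statement's English description precedes it below -/
import Mathlib

section
/- Let V and W be finite-dimensional vector spaces over a field k, and let σ_W : W⊗W → W⊗W, φ : V⊗W → W⊗V, ψ : W⊗V → V⊗W be linear isomorphisms satisfying: (e) (σ_W⊗id)∘(id⊗φ)∘(φ⊗id) = (id⊗φ)∘(φ⊗id)∘(id⊗σ_W) on V⊗W⊗W, and (f) (φ⊗id)∘(id⊗σ_W)∘(ψ⊗id) = (id⊗ψ)∘(σ_W⊗id)∘(id⊗φ) on W⊗V⊗W. Then, setting τ := ψ∘φ : V⊗W → V⊗W, the identity (id⊗τ)∘(φ⊗id) = (φ⊗id)∘(id⊗σ_W)∘(τ⊗id)∘(id⊗σ_W^{-1}) holds on V⊗W⊗W. -/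
open TensorProduct LinearMap

/-- Apply a linear map to the first two factors of a right-nested triple tensor product,
using the canonical associativity identifications. -/
noncomputable def fstMap (k : Type*) [Field k] {A B A' B' : Type*}
    [AddCommGroup A] [Module k A] [AddCommGroup B] [Module k B]
    [AddCommGroup A'] [Module k A'] [AddCommGroup B'] [Module k B']
    (C : Type*) [AddCommGroup C] [Module k C]
    (f : A ⊗[k] B →ₗ[k] A' ⊗[k] B') :
    A ⊗[k] (B ⊗[k] C) →ₗ[k] A' ⊗[k] (B' ⊗[k] C) :=
  (TensorProduct.assoc k A' B' C).toLinearMap ∘ₗ f.rTensor C ∘ₗ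
    (TensorProduct.assoc k A B C).symm.toLinearMap

/-- Given linear isomorphisms `σ_W : W⊗W ≃ W⊗W`, `φ : V⊗W ≃ W⊗V`, `ψ : W⊗V ≃ V⊗W`
satisfying the braid-type identities (e) and (f), the composite `τ := ψ∘φ` satisfies
`(id⊗τ)∘(φ⊗id) = (φ⊗id)∘(id⊗σ_W)∘(τ⊗id)∘(id⊗σ_W⁻¹)` on `V⊗W⊗W`. -/
theorem tau_phi_identity (k : Type*) [Field k] (V W : Type*)
    [AddCommGroup V] [Module k V] [FiniteDimensional k V]
    [AddCommGroup W] [Module k W] [FiniteDimensional k W]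
    (σW : W ⊗[k] W ≃ₗ[k] W ⊗[k] W)
    (φ : V ⊗[k] W ≃ₗ[k] W ⊗[k] V)
    (ψ : W ⊗[k] V ≃ₗ[k] V ⊗[k] W)
    -- (e) on V⊗W⊗W
    (he : fstMap k V σW.toLinearMap ∘ₗ lTensor W φ.toLinearMap ∘ₗ fstMap k W φ.toLinearMap =
      lTensor W φ.toLinearMap ∘ₗ fstMap k W φ.toLinearMap ∘ₗ lTensor V σW.toLinearMap)
    -- (f) on W⊗V⊗W
    (hf : fstMap k W φ.toLinearMap ∘ₗ lTensor V σW.toLinearMap ∘ₗ fstMap k W ψ.toLinearMap =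
      lTensor W ψ.toLinearMap ∘ₗ fstMap k V σW.toLinearMap ∘ₗ lTensor W φ.toLinearMap) :
    lTensor W (ψ.toLinearMap ∘ₗ φ.toLinearMap) ∘ₗ fstMap k W φ.toLinearMap =
      fstMap k W φ.toLinearMap ∘ₗ lTensor V σW.toLinearMap ∘ₗ
        fstMap k W (ψ.toLinearMap ∘ₗ φ.toLinearMap) ∘ₗ
          lTensor V σW.symm.toLinearMap := by

  have hcomp : fstMap k W (ψ.toLinearMap ∘ₗ φ.toLinearMap)
      = fstMap k W ψ.toLinearMap ∘ₗ fstMap k W φ.toLinearMap := by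
    unfold fstMap
    ext v w c
    simp [rTensor_tmul]
  have hcan : lTensor V σW.toLinearMap ∘ₗ lTensor V σW.symm.toLinearMap
      = LinearMap.id := by
    rw [← lTensor_comp]
    ext v w
    simp
  set e1 := fstMap k V σW.toLinearMap
  set e2 := lTensor W φ.toLinearMap
  set e3 := fstMap k W φ.toLinearMap
  set e4 := lTensor V σW.toLinearMap
  set e5 := fstMap k W ψ.toLinearMap
  set e6 := lTensor W ψ.toLinearMap
  have h : e6 ∘ₗ e2 ∘ₗ e3 ∘ₗ e4 = e3 ∘ₗ e4 ∘ₗ e5 ∘ₗ e3 := by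
    calc e6 ∘ₗ e2 ∘ₗ e3 ∘ₗ e4 = e6 ∘ₗ (e2 ∘ₗ e3 ∘ₗ e4) := by
          simp only [comp_assoc]
      _ = e6 ∘ₗ (e1 ∘ₗ e2 ∘ₗ e3) := by rw [← he]
      _ = (e6 ∘ₗ e1 ∘ₗ e2) ∘ₗ e3 := by simp only [comp_assoc]
      _ = (e3 ∘ₗ e4 ∘ₗ e5) ∘ₗ e3 := by rw [← hf]
      _ = e3 ∘ₗ e4 ∘ₗ e5 ∘ₗ e3 := by simp only [comp_assoc]
  rw [hcomp, lTensor_comp]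
  calc e6 ∘ₗ e2 ∘ₗ e3
      = (e6 ∘ₗ e2 ∘ₗ e3 ∘ₗ e4) ∘ₗ lTensor V σW.symm.toLinearMap := by
        simp only [comp_assoc, hcan, comp_id]
    _ = (e3 ∘ₗ e4 ∘ₗ e5 ∘ₗ e3) ∘ₗ lTensor V σW.symm.toLinearMap := by rw [h]
    _ = e3 ∘ₗ e4 ∘ₗ (e5 ∘ₗ e3) ∘ₗ lTensor V σW.symm.toLinearMap := by
        simp only [comp_assoc]
end

section
/- Let V and W be finite-dimensional vector spaces over a field k, and let σ_W : W⊗W → W⊗W, φ : V⊗W → W⊗V, ψ : W⊗V → V⊗W be linear isomorphisms satisfying: (e) (σ_W⊗id)∘(id⊗φ)∘(φ⊗id) = (id⊗φ)∘(φ⊗id)∘(id⊗σ_W) on V⊗W⊗W, (f) (φ⊗id)∘(id⊗σ_W)∘(ψ⊗id) = (id⊗ψ)∘(σ_W⊗id)∘(id⊗φ) on W⊗V⊗W, and (g) (ψ⊗id)∘(id⊗ψ)∘(σ_W⊗id) = (id⊗σ_W)∘(ψ⊗id)∘(id⊗ψ) on W⊗W⊗V. Then, setting τ := ψ∘φ :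 V⊗W → V⊗W, the mixed braid equation (τ⊗id)∘(id⊗σ_W)∘(τ⊗id)∘(id⊗σ_W) = (id⊗σ_W)∘(τ⊗id)∘(id⊗σ_W)∘(τ⊗id) holds on V⊗W⊗W. -/
open TensorProduct LinearMap

theorem fstMap_comp (k : Type*) [Field k] {A B A' B' A'' B'' : Type*}
    [AddCommGroup A] [Module k A] [AddCommGroup B] [Module k B]
    [AddCommGroup A'] [Module k A'] [AddCommGroup B'] [Module k B']
    [AddCommGroup A''] [Module k A''] [AddCommGroup B''] [Module k B'']
    (C : Type*) [AddCommGroup C] [Module k C]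
    (g : A' ⊗[k] B' →ₗ[k] A'' ⊗[k] B'') (f : A ⊗[k] B →ₗ[k] A' ⊗[k] B') :
    fstMap k C (g ∘ₗ f) = fstMap k C g ∘ₗ fstMap k C f := by
  unfold fstMap
  ext a b c
  simp

/-- Given linear isomorphisms `σ_W : W⊗W ≃ W⊗W`, `φ : V⊗W ≃ W⊗V`, `ψ : W⊗V ≃ V⊗W`
satisfying the braid-type identities (e), (f) and (g), the composite `τ := ψ∘φ`
satisfies the mixed braid equation
`(τ⊗id)∘(id⊗σ_W)∘(τ⊗id)∘(id⊗σ_W) = (id⊗σ_W)∘(τ⊗id)∘(id⊗σ_W)∘(τ⊗id)` on `V⊗W⊗W`. -/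
theorem tau_mixed_braid (k : Type*) [Field k] (V W : Type*)
    [AddCommGroup V] [Module k V] [FiniteDimensional k V]
    [AddCommGroup W] [Module k W] [FiniteDimensional k W]
    (σW : W ⊗[k] W ≃ₗ[k] W ⊗[k] W)
    (φ : V ⊗[k] W ≃ₗ[k] W ⊗[k] V)
    (ψ : W ⊗[k] V ≃ₗ[k] V ⊗[k] W)
    -- (e) on V⊗W⊗W
    (he : fstMap k V σW.toLinearMap ∘ₗ lTensor W φ.toLinearMap ∘ₗ fstMap k W φ.toLinearMap =
      lTensor W φ.toLinearMap ∘ₗ fstMap k W φ.toLinearMap ∘ₗ lTensor V σW.toLinearMap)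
    -- (f) on W⊗V⊗W
    (hf : fstMap k W φ.toLinearMap ∘ₗ lTensor V σW.toLinearMap ∘ₗ fstMap k W ψ.toLinearMap =
      lTensor W ψ.toLinearMap ∘ₗ fstMap k V σW.toLinearMap ∘ₗ lTensor W φ.toLinearMap)
    -- (g) on W⊗W⊗V
    (hg : fstMap k W ψ.toLinearMap ∘ₗ lTensor W ψ.toLinearMap ∘ₗ fstMap k V σW.toLinearMap =
      lTensor V σW.toLinearMap ∘ₗ fstMap k W ψ.toLinearMap ∘ₗ lTensor W ψ.toLinearMap) :
    fstMap k W (ψ.toLinearMap ∘ₗ φ.toLinearMap) ∘ₗ lTensor V σW.toLinearMap ∘ₗ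
        fstMap k W (ψ.toLinearMap ∘ₗ φ.toLinearMap) ∘ₗ lTensor V σW.toLinearMap =
      lTensor V σW.toLinearMap ∘ₗ fstMap k W (ψ.toLinearMap ∘ₗ φ.toLinearMap) ∘ₗ
        lTensor V σW.toLinearMap ∘ₗ fstMap k W (ψ.toLinearMap ∘ₗ φ.toLinearMap) := by
  rw [fstMap_comp]
  set P := fstMap k W φ.toLinearMap with hP
  set Q := fstMap k W ψ.toLinearMap with hQ
  set S := fstMap k V σW.toLinearMap with hS
  set L := lTensor V σW.toLinearMap with hL
  set lφ := lTensor W φ.toLinearMap with hlφ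
  set lψ := lTensor W ψ.toLinearMap with hlψ
  have he' : ∀ z, S (lφ (P z)) = lφ (P (L z)) := fun z => by
    simpa using LinearMap.congr_fun he z
  have hf' : ∀ y, P (L (Q y)) = lψ (S (lφ y)) := fun y => by
    simpa using LinearMap.congr_fun hf y
  have hg' : ∀ w, Q (lψ (S w)) = L (Q (lψ w)) := fun w => by
    simpa using LinearMap.congr_fun hg w
  apply LinearMap.ext
  intro x
  simp only [LinearMap.comp_apply]
  rw [hf' (P (L x)), hg', ← he', hg', hf' (P x), hg']
end
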